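/- Future-imposed inventory bounds: if a minimax-MDP admits a feasible policy π, then for every t ∈ {1,…,T} and every π-compatible partial trajectory (s₁, x₁, s₂, x₂, …, s_t, x_t) with s₁ the initial environment state and x₁ = 0, one has L_{⋆⇝t}(s_t) ≤ x_t ≤ R_{⋆⇝t}(s_t). -/

import Mathlib

/-- A minimax Markov Decision Process. -/
structure MinimaxMDP where
  /-- time horizon -/
  T : ℕ
  /-- ambient type of environment states -/
  State : Type
  /-- the ambient type of states is finite -/
  fintype_state : Fintype State
  /-- the set of environment states available at each time -/
  S : ℕ → Set State
  /-- the initial environment state -/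
  s1 : State
  /-- the environment state transition map -/
  F : ℕ → State → Set State
  /-- lower action bounds -/
  U : ℕ → State → ℝ
  /-- upper action bounds -/
  V : ℕ → State → ℝ
  /-- lower inventory bounds -/
  L : ℕ → State → ℝ
  /-- upper inventory bounds -/
  R : ℕ → State → ℝ

namespace MinimaxMDP

variable (M : MinimaxMDP)

/-- The structural hypotheses on a minimax-MDP. -/
def IsValid : Prop :=
  1 ≤ M.T ∧
  (∀ t, 1 ≤ t → t ≤ M.T → (M.S t).Nonempty) ∧
  M.s1 ∈ M.S 1 ∧
  (∀ t s, 1 ≤ t → t + 1 ≤ M.T → s ∈ M.S t → (M.F t s).Nonempty ∧ M.F t s ⊆ M.S (t + 1)) ∧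
  (∀ t s, 1 ≤ t → t + 1 ≤ M.T → s ∈ M.S t → M.U t s ≤ M.V t s) ∧
  M.L 1 M.s1 = 0 ∧ M.R 1 M.s1 = 0

/-- A compatible environment state trajectory on the time window `[α, β]`. -/
def EnvCompat (α β : ℕ) (s : ℕ → M.State) : Prop :=
  (∀ t, α ≤ t → t ≤ β → s t ∈ M.S t) ∧
  (∀ t, α ≤ t → t < β → s (t + 1) ∈ M.F t (s t))

/-- `F_{α→β}(a)`: the set of endpoints of compatible environment trajectories starting at `a`. -/
def Reach (α β : ℕ) (a : M.State) : Set M.State :=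
  {b | ∃ s : ℕ → M.State, M.EnvCompat α β s ∧ s α = a ∧ s β = b}

/-- `U_{α→β}(a, b)`: the maximal cumulative lower action bound along compatible trajectories. -/
noncomputable def Umax (α β : ℕ) (a b : M.State) : ℝ :=
  sSup {u | ∃ s : ℕ → M.State, M.EnvCompat α β s ∧ s α = a ∧ s β = b ∧
    u = ∑ t ∈ Finset.Ico α β, M.U t (s t)}

/-- `V_{α→β}(a, b)`: the minimal cumulative upper action bound along compatible trajectories. -/
noncomputable def Vmin (α β : ℕ) (a b : M.State) : ℝ :=
  sInf {v | ∃ s : ℕ → M.State, M.EnvCompat α β s ∧ s α = a ∧ s β = b ∧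
    v = ∑ t ∈ Finset.Ico α β, M.V t (s t)}

/-- `R_{β⇝α}(a)`. -/
noncomputable def Rto (β α : ℕ) (a : M.State) : ℝ :=
  sInf ((fun b => M.R β b - M.Umax α β a b) '' M.Reach α β a)

/-- `L_{β⇝α}(a)`. -/
noncomputable def Lto (β α : ℕ) (a : M.State) : ℝ :=
  sSup ((fun b => M.L β b - M.Vmin α β a b) '' M.Reach α β a)

/-- `R_{⋆⇝α}(a)`. -/
noncomputable def Rstar (α : ℕ) (a : M.State) : ℝ :=
  sInf ((fun β => M.Rto β α a) '' Set.Icc α M.T)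

/-- `L_{⋆⇝α}(a)`. -/
noncomputable def Lstar (α : ℕ) (a : M.State) : ℝ :=
  sSup ((fun β => M.Lto β α a) '' Set.Icc α M.T)

/-- `R_{⋆⇝α→[α+1]}(a)`. -/
noncomputable def RstarBr (α : ℕ) (a : M.State) : ℝ :=
  sInf ((fun b => M.Rstar (α + 1) b) '' M.F α a)

/-- `L_{⋆⇝α→[α+1]}(a)`. -/
noncomputable def LstarBr (α : ℕ) (a : M.State) : ℝ :=
  sSup ((fun b => M.Lstar (α + 1) b) '' M.F α a)

/-- The future-imposed conditions. -/
def FutureImposed : Prop :=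
  M.Lstar 1 M.s1 ≤ M.Rstar 1 M.s1 ∧
  ∀ α, 2 ≤ α → α ≤ M.T → ∀ a ∈ M.Reach 1 (α - 1) M.s1,
    M.LstarBr (α - 1) a ≤ M.RstarBr (α - 1) a

/-- A `π`-compatible partial trajectory on `[α, β]`. -/
def PiCompat (π : ℕ → M.State → ℝ → ℝ) (α β : ℕ) (s : ℕ → M.State) (x : ℕ → ℝ) : Prop :=
  M.EnvCompat α β s ∧ ∀ t, α ≤ t → t < β → x (t + 1) = x t + π t (s t) (x t)

/-- A feasible partial trajectory on `[α, β]`. -/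
def FeasibleTraj (α β : ℕ) (s : ℕ → M.State) (x : ℕ → ℝ) : Prop :=
  (∀ t, α ≤ t → t < β →
    M.U t (s t) ≤ x (t + 1) - x t ∧ x (t + 1) - x t ≤ M.V t (s t)) ∧
  (∀ t, α ≤ t → t ≤ β → M.L t (s t) ≤ x t ∧ x t ≤ M.R t (s t))

/-- A feasible policy: every `π`-compatible full trajectory is feasible. -/
def FeasiblePolicy (π : ℕ → M.State → ℝ → ℝ) : Prop :=
  ∀ s x, M.PiCompat π 1 M.T s x → s 1 = M.s1 → x 1 = 0 → M.FeasibleTraj 1 M.T s x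

end MinimaxMDP

namespace MinimaxMDP

/-- Any state in `S α` can be continued to a compatible environment trajectory on `[α, β]`. -/
lemma exists_envCompat (M : MinimaxMDP) (hM : M.IsValid) (α β : ℕ) (hα : 1 ≤ α)
    (hβT : β ≤ M.T) (a : M.State) (ha : a ∈ M.S α) :
    ∃ σ : ℕ → M.State, M.EnvCompat α β σ ∧ σ α = a := by
  obtain ⟨hT, hS, hs1, hF, hUV, hL1, hR1⟩ := hM
  classical
  let f : ℕ → M.State := fun n => Nat.rec a
    (fun n prev => if h : (M.F (α + n) prev).Nonempty then h.some else prev) n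
  have hf0 : f 0 = a := rfl
  have hfsucc : ∀ n, f (n + 1) =
      if h : (M.F (α + n) (f n)).Nonempty then h.some else f n := fun n => rfl
  have hfS : ∀ n, α + n ≤ M.T → f n ∈ M.S (α + n) := by
    intro n
    induction n with
    | zero => intro _; simpa [hf0] using ha
    | succ n ih =>
      intro hle
      have hn : α + n ≤ M.T := by omega
      have h1 : 1 ≤ α + n := by omega
      have h2 : α + n + 1 ≤ M.T := by omega
      obtain ⟨hne, hsub⟩ := hF (α + n) (f n) h1 h2 (ih hn)
      have : f (n + 1) = hne.some := by rw [hfsucc]; simp [hne]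
      rw [this]
      have : hne.some ∈ M.F (α + n) (f n) := hne.some_mem
      have := hsub this
      simpa [Nat.add_assoc] using this
  refine ⟨fun τ => f (τ - α), ⟨?_, ?_⟩, by simp [hf0]⟩
  · intro τ hατ hτβ
    have := hfS (τ - α) (by omega)
    have hτ : α + (τ - α) = τ := by omega
    rwa [hτ] at this
  · intro τ hατ hτβ
    have h1 : 1 ≤ α + (τ - α) := by omega
    have h2 : α + (τ - α) + 1 ≤ M.T := by omega
    have hmem := hfS (τ - α) (by omega)
    obtain ⟨hne, hsub⟩ := hF (α + (τ - α)) (f (τ - α)) h1 h2 hmem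
    have hτ : α + (τ - α) = τ := by omega
    rw [hτ] at hne
    have heq : τ + 1 - α = (τ - α) + 1 := by omega
    have : f ((τ - α) + 1) = _root_.dite (M.F (α + (τ - α)) (f (τ - α))).Nonempty
        (fun h => h.some) (fun _ => f (τ - α)) := hfsucc (τ - α)
    rw [hτ] at this
    show f (τ + 1 - α) ∈ M.F τ (f (τ - α))
    rw [heq, this]
    simp only [hne, dif_pos]
    exact hne.some_mem

/-- The key estimate: along any compatible environment continuation `σ` of a `π`-compatible
trajectory, the inventory bounds at the endpoint constrain `x t`. -/
lemma key_bounds (M : MinimaxMDP) (hM : M.IsValid)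
    (π : ℕ → M.State → ℝ → ℝ) (hπ : M.FeasiblePolicy π)
    (t : ℕ) (ht1 : 1 ≤ t) (htT : t ≤ M.T)
    (s : ℕ → M.State) (x : ℕ → ℝ)
    (hcompat : M.PiCompat π 1 t s x) (hs1 : s 1 = M.s1) (hx1 : x 1 = 0)
    (β : ℕ) (htβ : t ≤ β) (hβT : β ≤ M.T)
    (σ : ℕ → M.State) (hσ : M.EnvCompat t β σ) (hσt : σ t = s t) :
    x t + ∑ τ ∈ Finset.Ico t β, M.U τ (σ τ) ≤ M.R β (σ β) ∧
    M.L β (σ β) ≤ x t + ∑ τ ∈ Finset.Ico t β, M.V τ (σ τ) := by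
  classical
  have hσβS : σ β ∈ M.S β := hσ.1 β htβ le_rfl
  obtain ⟨tail, htail, htail0⟩ := M.exists_envCompat hM β M.T (le_trans ht1 htβ) le_rfl
    (σ β) hσβS
  set s' : ℕ → M.State := fun τ => if τ < t then s τ else if τ ≤ β then σ τ else tail τ
    with hs'def
  have hs'lt : ∀ τ, τ < t → s' τ = s τ := by intro τ h; simp [hs'def, h]
  have hs'mid : ∀ τ, t ≤ τ → τ ≤ β → s' τ = σ τ := by
    intro τ h1 h2
    simp [hs'def, Nat.not_lt.mpr h1, h2]
  have hs'hi : ∀ τ, β < τ → s' τ = tail τ := by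
    intro τ h
    have h1 : ¬ τ < t := by omega
    have h2 : ¬ τ ≤ β := by omega
    simp [hs'def, h1, h2]
  have hs'le : ∀ τ, 1 ≤ τ → τ ≤ t → s' τ = s τ := by
    intro τ h1 h2
    rcases lt_or_eq_of_le h2 with h | h
    · exact hs'lt τ h
    · subst h; rw [hs'mid τ le_rfl htβ, hσt]
  -- environment compatibility of s' on [1, T]
  have henv : M.EnvCompat 1 M.T s' := by
    constructor
    · intro τ h1 h2
      rcases Nat.lt_or_ge τ t with h | h
      · rw [hs'lt τ h]; exact hcompat.1.1 τ h1 (le_of_lt h)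
      · rcases le_or_gt τ β with h' | h'
        · rw [hs'mid τ h h']; exact hσ.1 τ h h'
        · rw [hs'hi τ h']; exact htail.1 τ (le_of_lt h') h2
    · intro τ h1 h2
      rcases Nat.lt_or_ge τ t with h | h
      · rw [hs'lt τ h, hs'le (τ + 1) (by omega) (by omega)]
        exact hcompat.1.2 τ h1 h
      · rcases Nat.lt_or_ge τ β with h' | h'
        · rw [hs'mid τ h (le_of_lt h'), hs'mid (τ + 1) (by omega) (by omega)]
          exact hσ.2 τ h h'
        · rcases Nat.lt_or_ge β τ with h'' | h''
          · rw [hs'hi τ h'', hs'hi (τ + 1) (by omega)]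
            exact htail.2 τ (le_of_lt h'') h2
          · have hτβ : τ = β := le_antisymm h'' h'
            subst hτβ
            rw [hs'mid τ h le_rfl, hs'hi (τ + 1) (by omega)]
            have := htail.2 τ le_rfl h2
            rwa [htail0] at this
  -- the policy-generated inventory sequence
  let X : ℕ → ℝ := fun n => Nat.rec (0 : ℝ)
    (fun n prev => if n = 0 then 0 else prev + π n (s' n) prev) n
  have hX1 : X 1 = 0 := by simp [X]
  have hXsucc : ∀ n, 1 ≤ n → X (n + 1) = X n + π n (s' n) (X n) := by
    intro n hn
    have : X (n + 1) = if n = 0 then 0 else X n + π n (s' n) (X n) := rfl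
    rw [this, if_neg (by omega)]
  have hPi : M.PiCompat π 1 M.T s' X := by
    refine ⟨henv, ?_⟩
    intro τ h1 h2
    exact hXsucc τ h1
  have hs'1 : s' 1 = M.s1 := by rw [hs'le 1 le_rfl ht1, hs1]
  have hfeas := hπ s' X hPi hs'1 hX1
  -- X agrees with x on [1, t]
  have hXx : ∀ τ, 1 ≤ τ → τ ≤ t → X τ = x τ := by
    intro τ
    induction τ with
    | zero => omega
    | succ n ih =>
      intro h1 h2
      rcases Nat.eq_or_lt_of_le h1 with h | h
      · rw [← h, hX1, hx1]
      · have hn1 : 1 ≤ n := by omega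
        have hnt : n < t := by omega
        rw [hXsucc n hn1, ih hn1 (le_of_lt hnt), hs'lt n hnt,
          ← hcompat.2 n hn1 hnt]
  -- telescoping bounds
  have hsum : ∀ γ, t ≤ γ → γ ≤ β →
      x t + ∑ τ ∈ Finset.Ico t γ, M.U τ (σ τ) ≤ X γ ∧
      X γ ≤ x t + ∑ τ ∈ Finset.Ico t γ, M.V τ (σ τ) := by
    intro γ hγ
    induction γ, hγ using Nat.le_induction with
    | base =>
      intro _
      rw [Finset.Ico_self, Finset.sum_empty, Finset.sum_empty, hXx t ht1 le_rfl]
      simp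
    | succ γ hγ ih =>
      intro hle
      have hγβ : γ ≤ β := by omega
      obtain ⟨ih1, ih2⟩ := ih hγβ
      have h1γ : 1 ≤ γ := le_trans ht1 hγ
      have hγT : γ < M.T := by omega
      obtain ⟨hU, hV⟩ := hfeas.1 γ h1γ hγT
      rw [hs'mid γ hγ hγβ] at hU hV
      rw [Finset.sum_Ico_succ_top hγ, Finset.sum_Ico_succ_top hγ]
      constructor <;> linarith
  obtain ⟨hlo, hhi⟩ := hsum β htβ le_rfl
  have hβ1 : 1 ≤ β := le_trans ht1 htβ
  obtain ⟨hL, hR⟩ := hfeas.2 β hβ1 hβT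
  rw [hs'mid β htβ le_rfl] at hL hR
  exact ⟨le_trans hlo hR, le_trans hL hhi⟩

end MinimaxMDP

/-- **Lemma (Future-imposed inventory bounds).** If a minimax-MDP admits a feasible policy `π`,
then for every `t ∈ {1,…,T}` and every `π`-compatible partial trajectory
`(s₁, x₁, …, s_t, x_t)` with `s₁` the initial environment state and `x₁ = 0`, one has
`L_{⋆⇝t}(s_t) ≤ x_t ≤ R_{⋆⇝t}(s_t)`. -/
theorem futureImposed_inventory_bounds (M : MinimaxMDP) (hM : M.IsValid)
    (π : ℕ → M.State → ℝ → ℝ) (hπ : M.FeasiblePolicy π)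
    (t : ℕ) (ht1 : 1 ≤ t) (htT : t ≤ M.T)
    (s : ℕ → M.State) (x : ℕ → ℝ)
    (hcompat : M.PiCompat π 1 t s x) (hs1 : s 1 = M.s1) (hx1 : x 1 = 0) :
    M.Lstar t (s t) ≤ x t ∧ x t ≤ M.Rstar t (s t) := by
  classical
  have hstS : s t ∈ M.S t := hcompat.1.1 t ht1 le_rfl
  -- Reach t β (s t) is nonempty for all t ≤ β ≤ T
  have hReachNe : ∀ β, t ≤ β → β ≤ M.T → (M.Reach t β (s t)).Nonempty := by
    intro β htβ hβT
    obtain ⟨σ, hσ, hσt⟩ := M.exists_envCompat hM t β ht1 hβT (s t) hstS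
    exact ⟨σ β, σ, hσ, hσt, rfl⟩
  constructor
  · -- Lstar ≤ x t
    apply csSup_le
    · exact ⟨M.Lto t t (s t), ⟨t, ⟨le_rfl, htT⟩, rfl⟩⟩
    · rintro l ⟨β, ⟨htβ, hβT⟩, rfl⟩
      apply csSup_le
      · obtain ⟨b, hb⟩ := hReachNe β htβ hβT
        exact ⟨M.L β b - M.Vmin t β (s t) b, b, hb, rfl⟩
      · rintro l ⟨b, hb, rfl⟩
        obtain ⟨σ0, hσ0, hσ0t, hσ0β⟩ := hb
        have : M.L β b - x t ≤ M.Vmin t β (s t) b := by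
          apply le_csInf
          · exact ⟨∑ τ ∈ Finset.Ico t β, M.V τ (σ0 τ), σ0, hσ0, hσ0t, hσ0β, rfl⟩
          · rintro v ⟨σ, hσ, hσt, hσβ, rfl⟩
            have hkey := M.key_bounds hM π hπ t ht1 htT s x hcompat hs1 hx1
              β htβ hβT σ hσ hσt
            rw [hσβ] at hkey
            linarith [hkey.2]
        dsimp only
        linarith
  · -- x t ≤ Rstar
    apply le_csInf
    · exact ⟨M.Rto t t (s t), ⟨t, ⟨le_rfl, htT⟩, rfl⟩⟩
    · rintro r ⟨β, ⟨htβ, hβT⟩, rfl⟩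
      apply le_csInf
      · obtain ⟨b, hb⟩ := hReachNe β htβ hβT
        exact ⟨M.R β b - M.Umax t β (s t) b, b, hb, rfl⟩
      · rintro r ⟨b, hb, rfl⟩
        obtain ⟨σ0, hσ0, hσ0t, hσ0β⟩ := hb
        have : M.Umax t β (s t) b ≤ M.R β b - x t := by
          apply csSup_le
          · exact ⟨∑ τ ∈ Finset.Ico t β, M.U τ (σ0 τ), σ0, hσ0, hσ0t, hσ0β, rfl⟩
          · rintro u ⟨σ, hσ, hσt, hσβ, rfl⟩
            have hkey := M.key_bounds hM π hπ t ht1 htT s x hcompat hs1 hx1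
              β htβ hβT σ hσ hσt
            rw [hσβ] at hkey
            linarith [hkey.1]
        dsimp only
        linarith
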